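/- Consider the four skew-symmetric 2-forms on ℂ⁶ (basis e₀,…,e₅): ω₀ = e₁∧e₅ + e₃∧e₄, ω₁ = e₀∧e₅ − e₂∧e₃, ω₂ = e₀∧e₂ + e₁∧e₃, ω₃ = e₀∧e₃ + e₁∧e₄. Then ω₀∧ω₃ + ω₁∧ω₂ = 0 in ⋀⁴ℂ⁶, and the Pfaffian of x₀ω₀ + x₁ω₁ + x₂ω₂ + x₃ω₃ equals (up to a nonzero constant) x₀²x₂ + x₁²x₃, the equation of Cayley's ruled cubic surface. -/
import Mathlib


open ExteriorAlgebra

noncomputable section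

abbrev V6 := Fin 6 → ℂ

/-- standard basis vectors of ℂ⁶ -/
def e (i : Fin 6) : V6 := Pi.single i 1

/-- image of basis vectors in the exterior algebra -/
def ev (i : Fin 6) : ExteriorAlgebra ℂ V6 := ExteriorAlgebra.ι ℂ (e i)

/-- the volume element e₀∧e₁∧e₂∧e₃∧e₄∧e₅ -/
def vol : ExteriorAlgebra ℂ V6 := ev 0 * ev 1 * ev 2 * ev 3 * ev 4 * ev 5

lemma ev_sq (i : Fin 6) : ev i * ev i = 0 := ι_sq_zero _

lemma ev_sq' (i : Fin 6) (x : ExteriorAlgebra ℂ V6) : ev i * (ev i * x) = 0 := by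
  rw [← mul_assoc, ev_sq, zero_mul]

lemma ev_swap (i j : Fin 6) (_h : j < i) : ev i * ev j = -(ev j * ev i) := by
  have := ι_add_mul_swap (R := ℂ) (e j) (e i)
  unfold ev; rw [eq_neg_iff_add_eq_zero, add_comm]; exact this

lemma ev_swap' (i j : Fin 6) (h : j < i) (x : ExteriorAlgebra ℂ V6) :
    ev i * (ev j * x) = -(ev j * (ev i * x)) := by
  rw [← mul_assoc, ev_swap i j h, neg_mul, mul_assoc]

set_option maxHeartbeats 2000000 in

/-- For ω₀ = e₁∧e₅ + e₃∧e₄, ω₁ = e₀∧e₅ − e₂∧e₃, ω₂ = e₀∧e₂ + e₁∧e₃,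
ω₃ = e₀∧e₃ + e₁∧e₄: the relation ω₀∧ω₃ + ω₁∧ω₂ = 0 holds, and the Pfaffian of
x₀ω₀ + x₁ω₁ + x₂ω₂ + x₃ω₃ equals, up to a fixed nonzero constant, x₀²x₂ + x₁²x₃,
the equation of Cayley's ruled cubic surface. -/
theorem cayley_pfaffian
    (ω₀ ω₁ ω₂ ω₃ : ExteriorAlgebra ℂ V6)
    (h₀ : ω₀ = ev 1 * ev 5 + ev 3 * ev 4)
    (h₁ : ω₁ = ev 0 * ev 5 - ev 2 * ev 3)
    (h₂ : ω₂ = ev 0 * ev 2 + ev 1 * ev 3)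
    (h₃ : ω₃ = ev 0 * ev 3 + ev 1 * ev 4) :
    ω₀ * ω₃ + ω₁ * ω₂ = 0 ∧
    ∃ k : ℂ, k ≠ 0 ∧ ∀ x₀ x₁ x₂ x₃ : ℂ,
      (x₀ • ω₀ + x₁ • ω₁ + x₂ • ω₂ + x₃ • ω₃) *
      (x₀ • ω₀ + x₁ • ω₁ + x₂ • ω₂ + x₃ • ω₃) *
      (x₀ • ω₀ + x₁ • ω₁ + x₂ • ω₂ + x₃ • ω₃)
        = (k * (x₀^2 * x₂ + x₁^2 * x₃)) • vol := by
  subst h₀ h₁ h₂ h₃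
  constructor
  · simp (config := { decide := true }) [mul_add, add_mul, mul_sub, sub_mul,
      mul_assoc, ev_swap, ev_swap', ev_sq, ev_sq']
  · refine ⟨-6, by norm_num, fun x₀ x₁ x₂ x₃ => ?_⟩
    simp (config := { decide := true }) [vol, mul_add, add_mul, mul_sub, sub_mul,
      smul_add, smul_sub, smul_smul, smul_mul_assoc, mul_smul_comm, neg_mul, mul_neg,
      smul_neg, neg_neg, mul_assoc, ev_swap, ev_swap', ev_sq, ev_sq']
    module
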